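/- Let V and W be compact subsets of ℝ² that are closures of bounded simply connected open sets, with W convex. Let F = (u, v) : V → ℝ² with u, v continuous on V and harmonic on the interior of V, F(V) ⊆ W, and suppose the restriction of F to ∂V is a homeomorphism from ∂V onto ∂W. For α ∈ [0, π), let f_α := cos(α)·u + sin(α)·v on V. Then for every α ∈ [0, π), the set Max_{f_α} := { x ∈ ∂V : f_α(x) ≥ f_α(y) for all y in some neighborhood of x in V } is nonempty and connected, and the set Min_{f_α} := { x ∈ ∂V : f_α(x) ≤ f_α(y) for all y in some neighborhood of x in V } is nonempty and connected. -/

import Mathlib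

open Set Filter Topology

/-- The Laplacian `∂²u/∂x² + ∂²u/∂y²` of a function `u : ℝ² → ℝ` at a point `p`. -/
noncomputable def lap2 (u : ℝ × ℝ → ℝ) (p : ℝ × ℝ) : ℝ :=
  fderiv ℝ (fun q => fderiv ℝ u q (1, 0)) p (1, 0) +
  fderiv ℝ (fun q => fderiv ℝ u q (0, 1)) p (0, 1)

/-- `u` is harmonic on `Ω ⊆ ℝ²`: twice continuously differentiable with vanishing Laplacian. -/
def HarmonicOn2 (u : ℝ × ℝ → ℝ) (Ω : Set (ℝ × ℝ)) : Prop :=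
  ContDiffOn ℝ 2 u Ω ∧ ∀ p ∈ Ω, lap2 u p = 0

/-- `V` is the closure of a bounded, nonempty, simply connected open subset of `ℝ²`. -/
def IsClosureOfSCRegion (V : Set (ℝ × ℝ)) : Prop :=
  ∃ Ω : Set (ℝ × ℝ), IsOpen Ω ∧ Bornology.IsBounded Ω ∧ Ω.Nonempty ∧
    SimplyConnectedSpace Ω ∧ V = closure Ω

set_option maxHeartbeats 1000000





/-- Second directional derivative is ≤ 0 at an interior local max of a C² function. -/
lemma second_dir_nonpos {g : ℝ × ℝ → ℝ} {U : Set (ℝ × ℝ)} (hU : IsOpen U)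
    (hg : ContDiffOn ℝ 2 g U) {p : ℝ × ℝ} (hp : p ∈ U) (hmax : IsLocalMax g p)
    (e : ℝ × ℝ) : fderiv ℝ (fun q => fderiv ℝ g q e) p e ≤ 0 := by
  by_contra hpos
  push_neg at hpos
  set D1 : (ℝ × ℝ) → ℝ := fun q => fderiv ℝ g q e with hD1
  -- D1 is C¹ on U
  have hfd : ContDiffOn ℝ 1 (fderiv ℝ g) U := hg.fderiv_of_isOpen hU (by norm_num)
  have hD1c : ContDiffOn ℝ 1 D1 U :=
    (ContinuousLinearMap.apply ℝ ℝ e).contDiff.comp_contDiffOn hfd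
  have hD1diff : DifferentiableAt ℝ D1 p :=
    ((hD1c.contDiffAt (hU.mem_nhds hp)).differentiableAt one_ne_zero)
  set c : ℝ := fderiv ℝ D1 p e with hc
  have hcpos : 0 < c := hpos
  -- the function along the line
  have hline : ∀ t : ℝ, HasDerivAt (fun s : ℝ => p + s • e) e t := by
    intro t
    simpa using ((hasDerivAt_id t).smul_const e).const_add p
  have hgdiff : ∀ q ∈ U, DifferentiableAt ℝ g q := fun q hq =>
    (hg.contDiffAt (hU.mem_nhds hq)).differentiableAt two_ne_zero
  have hφ : ∀ t : ℝ, p + t • e ∈ U → HasDerivAt (fun s => g (p + s • e)) (D1 (p + t • e)) t := by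
    intro t ht
    exact ((hgdiff _ ht).hasFDerivAt.comp_hasDerivAt t (hline t))
  -- derivative of D1 along the line at 0
  have hψ : HasDerivAt (fun s : ℝ => D1 (p + s • e)) c (0:ℝ) := by
    have h0 : HasFDerivAt D1 (fderiv ℝ D1 p) (p + (0:ℝ) • e) := by
      simpa using hD1diff.hasFDerivAt
    simpa [Function.comp_def] using h0.comp_hasDerivAt (0:ℝ) (hline 0)
  -- D1 p = 0
  have hD1p : D1 p = 0 := by
    have h0 : fderiv ℝ g p = 0 := hmax.fderiv_eq_zero
    simp [hD1, h0]
  -- choose δ with ball p δ ⊆ U and g ≤ g p on ball p δ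
  obtain ⟨δ, hδpos, hδ⟩ : ∃ δ > 0, Metric.ball p δ ⊆ U ∩ {q | g q ≤ g p} := by
    have h1 : U ∩ {q | g q ≤ g p} ∈ 𝓝 p := Filter.inter_mem (hU.mem_nhds hp) hmax
    exact Metric.mem_nhds_iff.1 h1
  -- ψ t > 0 for small positive t
  have hψpos : ∃ η > 0, ∀ t ∈ Ioo (0:ℝ) η, 0 < D1 (p + t • e) := by
    have hslope := hasDerivAt_iff_tendsto_slope.1 hψ
    have hev : ∀ᶠ t in 𝓝[≠] (0:ℝ), c/2 < slope (fun s : ℝ => D1 (p + s • e)) 0 t :=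
      hslope (IsOpen.mem_nhds isOpen_Ioi (by linarith : c/2 < c))
    have hev2 : ∀ᶠ t in 𝓝[>] (0:ℝ), c/2 < slope (fun s : ℝ => D1 (p + s • e)) 0 t :=
      hev.filter_mono (nhdsWithin_mono 0 (fun t ht => ne_of_gt ht))
    rw [eventually_nhdsWithin_iff] at hev2
    obtain ⟨A, hA, hA0, hAsub⟩ := eventually_nhds_iff.1 hev2
    obtain ⟨η, hη, hsub⟩ := Metric.isOpen_iff.1 hA0 0 hAsub
    refine ⟨η, hη, fun t ht => ?_⟩
    have htA : t ∈ A := hsub (by simpa [Real.dist_eq, abs_of_pos ht.1] using ht.2)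
    have := hA t htA ht.1
    have hslope_eq : slope (fun s : ℝ => D1 (p + s • e)) 0 t = D1 (p + t • e) / t := by
      simp [slope_def_field, hD1p]
    rw [hslope_eq] at this
    have : 0 < D1 (p + t • e) / t := lt_trans (by linarith) this
    exact (div_pos_iff.1 this).elim (fun h => h.1) (fun h => absurd ht.1 (by linarith [h.2]))
  obtain ⟨η, hηpos, hη⟩ := hψpos
  -- choose final step size
  set η₂ : ℝ := min (η/2) (δ/(2*(‖e‖+1))) with hη₂
  have hη₂pos : 0 < η₂ := lt_min (by linarith) (by positivity)
  have hmemU : ∀ t ∈ Icc (0:ℝ) η₂, p + t • e ∈ Metric.ball p δ := by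
    intro t ht
    simp only [Metric.mem_ball, dist_self_add_left]
    have h1 : ‖t • e‖ = t * ‖e‖ := by
      rw [norm_smul, Real.norm_eq_abs, abs_of_nonneg ht.1]
    rw [h1]
    have h2 : t ≤ δ/(2*(‖e‖+1)) := le_trans ht.2 (min_le_right _ _)
    have h3 : t * ‖e‖ ≤ δ/(2*(‖e‖+1)) * ‖e‖ :=
      mul_le_mul_of_nonneg_right h2 (norm_nonneg e)
    have h4 : δ/(2*(‖e‖+1)) * ‖e‖ < δ := by
      rw [div_mul_eq_mul_div, div_lt_iff₀ (by positivity)]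
      nlinarith [norm_nonneg e]
    linarith
  have hmono : StrictMonoOn (fun s => g (p + s • e)) (Icc 0 η₂) := by
    apply strictMonoOn_of_deriv_pos (convex_Icc 0 η₂)
    · intro t ht
      exact ((hφ t ((hδ (hmemU t ht)).1)).differentiableAt.continuousAt).continuousWithinAt
    · intro t ht
      rw [interior_Icc] at ht
      have htU : p + t • e ∈ U := (hδ (hmemU t ⟨ht.1.le, ht.2.le⟩)).1
      rw [(hφ t htU).deriv]
      exact hη t ⟨ht.1, lt_of_lt_of_le ht.2 (le_trans (min_le_left _ _) (by linarith))⟩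
  have hlt : g (p + (0:ℝ) • e) < g (p + η₂ • e) :=
    hmono (left_mem_Icc.2 hη₂pos.le) (right_mem_Icc.2 hη₂pos.le) hη₂pos
  have hle : g (p + η₂ • e) ≤ g p := (hδ (hmemU η₂ (right_mem_Icc.2 hη₂pos.le))).2
  simp only [zero_smul, add_zero] at hlt
  linarith



section quad
variable (ε : ℝ)

lemma quad_hasFDerivAt (q : ℝ × ℝ) :
    HasFDerivAt (fun q' : ℝ × ℝ => ε * (q'.1 * q'.1 + q'.2 * q'.2))
      (ε • (q.1 • ContinuousLinearMap.fst ℝ ℝ ℝ + q.1 • ContinuousLinearMap.fst ℝ ℝ ℝ +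
        (q.2 • ContinuousLinearMap.snd ℝ ℝ ℝ + q.2 • ContinuousLinearMap.snd ℝ ℝ ℝ))) q := by
  exact ((hasFDerivAt_fst.mul hasFDerivAt_fst).add (hasFDerivAt_snd.mul hasFDerivAt_snd)).const_mul ε

lemma lin_hasFDerivAt (e : ℝ × ℝ) (q : ℝ × ℝ) :
    HasFDerivAt (fun q' : ℝ × ℝ => ε * (2 * q'.1 * e.1 + 2 * q'.2 * e.2))
      (ε • ((2 * e.1) • ContinuousLinearMap.fst ℝ ℝ ℝ + (2 * e.2) • ContinuousLinearMap.snd ℝ ℝ ℝ)) q := by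
  have h1 : HasFDerivAt (fun q' : ℝ × ℝ => 2 * q'.1 * e.1)
      ((2 * e.1) • ContinuousLinearMap.fst ℝ ℝ ℝ) q := by
    have := (hasFDerivAt_fst (𝕜 := ℝ) (p := q) (F := ℝ)).const_mul 2
    have h2 := this.mul_const e.1
    rw [smul_smul, mul_comm e.1 2] at h2
    exact h2
  have h2 : HasFDerivAt (fun q' : ℝ × ℝ => 2 * q'.2 * e.2)
      ((2 * e.2) • ContinuousLinearMap.snd ℝ ℝ ℝ) q := by
    have := (hasFDerivAt_snd (𝕜 := ℝ) (p := q) (E := ℝ)).const_mul 2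
    have h2 := this.mul_const e.2
    rw [smul_smul, mul_comm e.2 2] at h2
    exact h2
  exact (h1.add h2).const_mul ε

lemma lap2_add_quad {f : ℝ × ℝ → ℝ} {U : Set (ℝ × ℝ)} (hU : IsOpen U)
    (hf : ContDiffOn ℝ 2 f U) {p : ℝ × ℝ} (hp : p ∈ U) (e : ℝ × ℝ) :
    fderiv ℝ (fun q => fderiv ℝ (fun q' => f q' + ε * (q'.1 * q'.1 + q'.2 * q'.2)) q e) p e
    = fderiv ℝ (fun q => fderiv ℝ f q e) p e + ε * (2 * e.1 * e.1 + 2 * e.2 * e.2) := by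
  have hfdiff : ∀ q ∈ U, DifferentiableAt ℝ f q := fun q hq =>
    (hf.contDiffAt (hU.mem_nhds hq)).differentiableAt two_ne_zero
  -- pointwise identity for first derivative applied to e, on U
  have key : ∀ q ∈ U, fderiv ℝ (fun q' => f q' + ε * (q'.1 * q'.1 + q'.2 * q'.2)) q e
      = fderiv ℝ f q e + ε * (2 * q.1 * e.1 + 2 * q.2 * e.2) := by
    intro q hq
    have h := ((hfdiff q hq).hasFDerivAt.add (quad_hasFDerivAt ε q)).fderiv
    rw [show (fun q' => f q' + ε * (q'.1 * q'.1 + q'.2 * q'.2)) = f + fun q' => ε * (q'.1 * q'.1 + q'.2 * q'.2) from rfl, h]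
    simp [ContinuousLinearMap.add_apply, ContinuousLinearMap.smul_apply]
    ring
  have hev : (fun q => fderiv ℝ (fun q' => f q' + ε * (q'.1 * q'.1 + q'.2 * q'.2)) q e)
      =ᶠ[𝓝 p] (fun q => fderiv ℝ f q e + ε * (2 * q.1 * e.1 + 2 * q.2 * e.2)) := by
    filter_upwards [hU.mem_nhds hp] with q hq using key q hq
  rw [hev.fderiv_eq]
  -- differentiability of the two summands
  have hD1diff : DifferentiableAt ℝ (fun q => fderiv ℝ f q e) p := by
    have hfd : ContDiffOn ℝ 1 (fderiv ℝ f) U := hf.fderiv_of_isOpen hU (by norm_num)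
    have : ContDiffOn ℝ 1 (fun q => fderiv ℝ f q e) U :=
      (ContinuousLinearMap.apply ℝ ℝ e).contDiff.comp_contDiffOn hfd
    exact (this.contDiffAt (hU.mem_nhds hp)).differentiableAt one_ne_zero
  have hlin := lin_hasFDerivAt ε e p
  rw [fderiv_fun_add hD1diff hlin.differentiableAt, hlin.fderiv]
  simp [ContinuousLinearMap.add_apply, ContinuousLinearMap.smul_apply]
  ring
end quad




/-- Weak maximum principle on the closure of a bounded open set. -/
lemma wmp {Ω : Set (ℝ × ℝ)} (hb : Bornology.IsBounded Ω) {f : ℝ × ℝ → ℝ}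
    (hf : ContinuousOn f (closure Ω)) (hh : HarmonicOn2 f (interior (closure Ω)))
    {B : ℝ} (hB : ∀ y ∈ frontier (closure Ω), f y ≤ B) :
    ∀ z ∈ closure Ω, f z ≤ B := by
  intro z hz
  set V := closure Ω with hVdef
  have hVcl : IsClosed V := isClosed_closure
  have hVc : IsCompact V := Metric.isCompact_of_isClosed_isBounded hVcl hb.closure
  have hquadc : Continuous fun q : ℝ × ℝ => q.1 * q.1 + q.2 * q.2 := by continuity
  obtain ⟨r, hrV, hrmax⟩ := hVc.exists_isMaxOn ⟨z, hz⟩ hquadc.continuousOn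
  set R : ℝ := r.1 * r.1 + r.2 * r.2 with hR
  have hR0 : 0 ≤ R := by nlinarith [sq_nonneg r.1, sq_nonneg r.2]
  have main : ∀ ε > (0:ℝ), f z ≤ B + ε * R := by
    intro ε hε
    set g : ℝ × ℝ → ℝ := fun q => f q + ε * (q.1 * q.1 + q.2 * q.2) with hgdef
    have hgcont : ContinuousOn g V := hf.add (continuous_const.mul hquadc).continuousOn
    obtain ⟨p₀, hp₀V, hp₀max⟩ := hVc.exists_isMaxOn ⟨z, hz⟩ hgcont
    have hcase : p₀ ∈ frontier V := by
      by_contra hint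
      have hp₀i : p₀ ∈ interior V := by
        have := hVcl.frontier_eq
        rw [this] at hint
        simp only [mem_diff, not_and, not_not] at hint
        exact hint hp₀V
      have hlocmax : IsLocalMax g p₀ := by
        filter_upwards [isOpen_interior.mem_nhds hp₀i] with q hq
        exact hp₀max (interior_subset hq)
      have hgC2 : ContDiffOn ℝ 2 g (interior V) :=
        hh.1.add ((contDiff_const.mul
          ((contDiff_fst.mul contDiff_fst).add (contDiff_snd.mul contDiff_snd))).contDiffOn)
      have h1 := second_dir_nonpos isOpen_interior hgC2 hp₀i hlocmax (1, 0)
      have h2 := second_dir_nonpos isOpen_interior hgC2 hp₀i hlocmax (0, 1)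
      have e1 := lap2_add_quad ε isOpen_interior hh.1 hp₀i ((1:ℝ), (0:ℝ))
      have e2 := lap2_add_quad ε isOpen_interior hh.1 hp₀i ((0:ℝ), (1:ℝ))
      have hlap : lap2 f p₀ = 0 := hh.2 p₀ hp₀i
      rw [lap2] at hlap
      rw [e1] at h1
      rw [e2] at h2
      norm_num at h1 h2
      linarith
    have h1 : f z ≤ g z := by
      have : 0 ≤ ε * (z.1 * z.1 + z.2 * z.2) := by nlinarith [sq_nonneg z.1, sq_nonneg z.2]
      simp only [hgdef]; linarith
    have h2 : g z ≤ g p₀ := hp₀max hz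
    have h3 : g p₀ ≤ B + ε * R := by
      have hfb := hB p₀ hcase
      have hquad : p₀.1 * p₀.1 + p₀.2 * p₀.2 ≤ R := hrmax hp₀V
      have : ε * (p₀.1 * p₀.1 + p₀.2 * p₀.2) ≤ ε * R := by nlinarith
      simp only [hgdef]; linarith
    linarith
  by_contra hcon
  push_neg at hcon
  have hεp : 0 < (f z - B) / (R + 1) := div_pos (by linarith) (by linarith)
  have := main _ hεp
  have : (f z - B) / (R + 1) * R < f z - B := by
    rw [div_mul_eq_mul_div, div_lt_iff₀ (by linarith)]
    nlinarith
  linarith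


lemma D1_differentiableAt {f : ℝ × ℝ → ℝ} {U : Set (ℝ × ℝ)} (hU : IsOpen U)
    (hf : ContDiffOn ℝ 2 f U) {p : ℝ × ℝ} (hp : p ∈ U) (e : ℝ × ℝ) :
    DifferentiableAt ℝ (fun q => fderiv ℝ f q e) p := by
  have hfd : ContDiffOn ℝ 1 (fderiv ℝ f) U := hf.fderiv_of_isOpen hU (by norm_num)
  have : ContDiffOn ℝ 1 (fun q => fderiv ℝ f q e) U :=
    (ContinuousLinearMap.apply ℝ ℝ e).contDiff.comp_contDiffOn hfd
  exact (this.contDiffAt (hU.mem_nhds hp)).differentiableAt one_ne_zero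

lemma harmonic_comb {U : Set (ℝ × ℝ)} (hU : IsOpen U) {u v : ℝ × ℝ → ℝ}
    (hu : HarmonicOn2 u U) (hv : HarmonicOn2 v U) (a b : ℝ) :
    HarmonicOn2 (fun p => a * u p + b * v p) U := by
  have hudiff : ∀ q ∈ U, DifferentiableAt ℝ u q := fun q hq =>
    (hu.1.contDiffAt (hU.mem_nhds hq)).differentiableAt two_ne_zero
  have hvdiff : ∀ q ∈ U, DifferentiableAt ℝ v q := fun q hq =>
    (hv.1.contDiffAt (hU.mem_nhds hq)).differentiableAt two_ne_zero
  constructor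
  · exact (contDiffOn_const.mul hu.1).add (contDiffOn_const.mul hv.1)
  · intro p hp
    have main : ∀ e : ℝ × ℝ,
        fderiv ℝ (fun q => fderiv ℝ (fun q' => a * u q' + b * v q') q e) p e
        = a * fderiv ℝ (fun q => fderiv ℝ u q e) p e
          + b * fderiv ℝ (fun q => fderiv ℝ v q e) p e := by
      intro e
      have key : ∀ q ∈ U, fderiv ℝ (fun q' => a * u q' + b * v q') q e
          = a * fderiv ℝ u q e + b * fderiv ℝ v q e := by
        intro q hq
        have h := (((hudiff q hq).hasFDerivAt.const_mul a).add
          ((hvdiff q hq).hasFDerivAt.const_mul b)).fderiv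
        rw [show (fun q' => a * u q' + b * v q') = (fun y => a * u y) + fun y => b * v y from rfl, h]; simp
      have hev : (fun q => fderiv ℝ (fun q' => a * u q' + b * v q') q e)
          =ᶠ[𝓝 p] (fun q => a * fderiv ℝ u q e + b * fderiv ℝ v q e) := by
        filter_upwards [hU.mem_nhds hp] with q hq using key q hq
      rw [hev.fderiv_eq]
      have hdu := D1_differentiableAt hU hu.1 hp e
      have hdv := D1_differentiableAt hU hv.1 hp e
      rw [fderiv_fun_add (hdu.const_mul a) (hdv.const_mul b)]
      rw [fderiv_const_mul hdu a, fderiv_const_mul hdv b]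
      simp
    have h1 := main (1, 0)
    have h2 := main (0, 1)
    have hu0 := hu.2 p hp
    have hv0 := hv.2 p hp
    rw [lap2] at hu0 hv0 ⊢
    rw [h1, h2]
    linear_combination a * hu0 + b * hv0


/-- A harmonic function constant on a nonempty open subset of a preconnected open set
is constant everywhere. -/
lemma harmonic_eq_const_of_open {f : ℝ × ℝ → ℝ} {U : Set (ℝ × ℝ)} (hU : IsOpen U)
    (hconn : IsPreconnected U) (hf : HarmonicOn2 f U) {O : Set (ℝ × ℝ)} (hO : IsOpen O)
    (hOne : O.Nonempty) (hOU : O ⊆ U) {c : ℝ} (hc : ∀ q ∈ O, f q = c) :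
    ∀ q ∈ U, f q = c := by
  classical
  set σ := Complex.equivRealProdCLM.symm with hσ
  set G : ℝ × ℝ → ℝ × ℝ := fun q => (fderiv ℝ f q (1, 0), -(fderiv ℝ f q (0, 1))) with hG
  set h : ℂ → ℂ := fun z => σ (G (z.re, z.im)) with hh
  set U' : Set ℂ := {z : ℂ | (z.re, z.im) ∈ U} with hU'
  have hρcont : Continuous fun z : ℂ => ((z.re, z.im) : ℝ × ℝ) :=
    Complex.continuous_re.prodMk Complex.continuous_im
  have hU'open : IsOpen U' := hU.preimage hρcont
  -- h is complex differentiable on U'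
  have hdiff : DifferentiableOn ℂ h U' := by
    intro z hz
    have hp : ((z.re, z.im) : ℝ × ℝ) ∈ U := hz
    set p : ℝ × ℝ := (z.re, z.im) with hpdef
    have hC2 : ContDiffAt ℝ 2 f p := hf.1.contDiffAt (hU.mem_nhds hp)
    have hder1 : ContDiffAt ℝ 1 (fderiv ℝ f) p := hC2.fderiv_right (by norm_num)
    set F'' : (ℝ × ℝ) →L[ℝ] (ℝ × ℝ) →L[ℝ] ℝ := fderiv ℝ (fderiv ℝ f) p with hF''def
    have hF'' : HasFDerivAt (fderiv ℝ f) F'' p :=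
      (hder1.differentiableAt one_ne_zero).hasFDerivAt
    have hev : ∀ᶠ y in 𝓝 p, HasFDerivAt f (fderiv ℝ f y) y := by
      filter_upwards [hU.mem_nhds hp] with y hy
      exact ((hf.1.contDiffAt (hU.mem_nhds hy)).differentiableAt two_ne_zero).hasFDerivAt
    have hsymm : ∀ vv ww, F'' vv ww = F'' ww vv :=
      fun vv ww => second_derivative_symmetric_of_eventually hev hF'' vv ww
    -- relating lap2 to F''
    have hcomp : ∀ e e' : ℝ × ℝ, fderiv ℝ (fun q => fderiv ℝ f q e) p e' = F'' e' e := by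
      intro e e'
      have hc2 := ((ContinuousLinearMap.apply ℝ ℝ e).hasFDerivAt.comp p hF'').fderiv
      have : fderiv ℝ (fun q => fderiv ℝ f q e) p
          = (ContinuousLinearMap.apply ℝ ℝ e).comp F'' := hc2
      rw [this]
      rfl
    set A : ℝ := F'' (1, 0) (1, 0) with hA
    set B : ℝ := F'' (1, 0) (0, 1) with hB
    have hlap : A + F'' (0, 1) (0, 1) = 0 := by
      have h0 := hf.2 p hp
      rw [lap2, hcomp, hcomp] at h0
      exact h0
    -- real derivative of G
    have hG1 : HasFDerivAt (fun q => fderiv ℝ f q ((1:ℝ), (0:ℝ)))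
        ((ContinuousLinearMap.apply ℝ ℝ ((1:ℝ),(0:ℝ))).comp F'') p :=
      (ContinuousLinearMap.apply ℝ ℝ ((1:ℝ),(0:ℝ))).hasFDerivAt.comp p hF''
    have hG2 : HasFDerivAt (fun q => -(fderiv ℝ f q ((0:ℝ), (1:ℝ))))
        (-((ContinuousLinearMap.apply ℝ ℝ ((0:ℝ),(1:ℝ))).comp F'')) p :=
      ((ContinuousLinearMap.apply ℝ ℝ ((0:ℝ),(1:ℝ))).hasFDerivAt.comp p hF'').neg
    have hGd : HasFDerivAt G
        ((((ContinuousLinearMap.apply ℝ ℝ ((1:ℝ),(0:ℝ))).comp F'')).prod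
          (-((ContinuousLinearMap.apply ℝ ℝ ((0:ℝ),(1:ℝ))).comp F''))) p :=
      hG1.prodMk hG2
    -- real derivative of h
    have hρ : HasFDerivAt (fun z : ℂ => ((z.re, z.im) : ℝ × ℝ))
        (Complex.equivRealProdCLM : ℂ →L[ℝ] ℝ × ℝ) z :=
      Complex.equivRealProdCLM.hasFDerivAt
    have hhd : HasFDerivAt h
        ((σ : ℝ × ℝ →L[ℝ] ℂ).comp
          (((((ContinuousLinearMap.apply ℝ ℝ ((1:ℝ),(0:ℝ))).comp F'')).prod
            (-((ContinuousLinearMap.apply ℝ ℝ ((0:ℝ),(1:ℝ))).comp F''))).comp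
            (Complex.equivRealProdCLM : ℂ →L[ℝ] ℝ × ℝ))) z := by
      have step := hGd.comp z hρ
      exact σ.hasFDerivAt.comp z step
    -- the complex linear candidate
    set m : ℂ := Complex.ofReal A - Complex.ofReal B * Complex.I with hm
    have hCR : HasFDerivAt h ((m • (1 : ℂ →L[ℂ] ℂ)).restrictScalars ℝ) z := by
      have heq : (m • (1 : ℂ →L[ℂ] ℂ)).restrictScalars ℝ
          = ((σ : ℝ × ℝ →L[ℝ] ℂ).comp
          (((((ContinuousLinearMap.apply ℝ ℝ ((1:ℝ),(0:ℝ))).comp F'')).prod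
            (-((ContinuousLinearMap.apply ℝ ℝ ((0:ℝ),(1:ℝ))).comp F''))).comp
            (Complex.equivRealProdCLM : ℂ →L[ℝ] ℝ × ℝ))) := by
        ext w
        have hw : ((w.re, w.im) : ℝ × ℝ)
            = w.re • ((1:ℝ),(0:ℝ)) + w.im • ((0:ℝ),(1:ℝ)) := by
          simp [Prod.ext_iff]
        simp only [ContinuousLinearMap.coe_restrictScalars', ContinuousLinearMap.smul_apply,
          ContinuousLinearMap.one_apply, ContinuousLinearMap.coe_comp', Function.comp_apply,
          ContinuousLinearMap.prod_apply, ContinuousLinearMap.neg_apply,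
          ContinuousLinearMap.apply_apply]
        have hρw : (Complex.equivRealProdCLM : ℂ →L[ℝ] ℝ × ℝ) w = (w.re, w.im) := rfl
        rw [hρw, hw, map_add, map_smul, map_smul]
        simp only [ContinuousLinearMap.add_apply, ContinuousLinearMap.smul_apply]
        have hσap : ∀ x : ℝ × ℝ, (σ : ℝ × ℝ →L[ℝ] ℂ) x
            = Complex.ofReal x.1 + Complex.ofReal x.2 * Complex.I :=
          fun x => Complex.equivRealProdCLM_symm_apply x
        rw [hσap]
        have hBA : F'' ((0:ℝ),(1:ℝ)) ((1:ℝ),(0:ℝ)) = B := by rw [hB]; exact hsymm _ _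
        have hAA : F'' ((0:ℝ),(1:ℝ)) ((0:ℝ),(1:ℝ)) = -A := by linarith [hlap]
        rw [hBA, hAA, ← hA, ← hB, hm]
        apply Complex.ext <;> simp <;> ring
      rw [heq]
      exact hhd
    have : HasFDerivAt h (m • (1 : ℂ →L[ℂ] ℂ)) z :=
      hasFDerivAt_of_restrictScalars ℝ hCR rfl
    exact this.differentiableAt.differentiableWithinAt
  -- h vanishes on O'
  set O' : Set ℂ := {z : ℂ | (z.re, z.im) ∈ O} with hO'
  have hO'open : IsOpen O' := hO.preimage hρcont
  have hhO : ∀ z ∈ O', h z = 0 := by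
    intro z hz
    have hfz : fderiv ℝ f (z.re, z.im) = 0 := by
      have hev : f =ᶠ[𝓝 ((z.re, z.im) : ℝ × ℝ)] fun _ => c := by
        filter_upwards [hO.mem_nhds hz] with q hq using hc q hq
      rw [hev.fderiv_eq]
      exact fderiv_const_apply c
    simp only [hh, hG, hfz]
    simp
  -- identity theorem
  obtain ⟨q₀, hq₀⟩ := hOne
  set z₀ : ℂ := ⟨q₀.1, q₀.2⟩ with hz₀
  have hz₀O' : z₀ ∈ O' := by simpa [hO', hz₀]
  have hz₀U' : z₀ ∈ U' := hOU hz₀O'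
  have hU'conn : IsPreconnected U' := by
    have himg : U' = Complex.equivRealProdCLM.toHomeomorph.symm '' U := by
      ext z
      simp only [hU', mem_setOf_eq, Homeomorph.symm, Set.mem_image]
      constructor
      · intro hzU
        exact ⟨(z.re, z.im), hzU, by
          apply Complex.ext <;> simp [Complex.equivRealProdCLM_symm_apply]⟩
      · rintro ⟨q, hqU, rfl⟩
        simpa [Complex.equivRealProdCLM_symm_apply] using hqU
    rw [himg]
    exact hconn.image _ (Homeomorph.continuous _).continuousOn
  have hzero : EqOn h 0 U' := by
    have han := (hdiff.analyticOnNhd hU'open)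
    apply han.eqOn_zero_of_preconnected_of_eventuallyEq_zero hU'conn hz₀U'
    filter_upwards [hO'open.mem_nhds hz₀O'] with z hz using hhO z hz
  -- fderiv f = 0 on U
  have hfd0 : ∀ p ∈ U, fderiv ℝ f p = 0 := by
    intro p hp
    have hzU' : (⟨p.1, p.2⟩ : ℂ) ∈ U' := by simpa [hU']
    have h0 := hzero hzU'
    have hGp : G p = 0 := by
      have : σ (G p) = σ 0 := by
        rw [map_zero]
        simpa [hh] using h0
      exact σ.injective this
    have h1 : fderiv ℝ f p ((1:ℝ),(0:ℝ)) = 0 := by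
      have := congrArg Prod.fst hGp; simpa [hG] using this
    have h2 : fderiv ℝ f p ((0:ℝ),(1:ℝ)) = 0 := by
      have := congrArg Prod.snd hGp
      simp only [hG, Prod.snd_zero, neg_eq_zero] at this
      exact this
    refine ContinuousLinearMap.ext fun w => ?_
    have hw : w = w.1 • ((1:ℝ),(0:ℝ)) + w.2 • ((0:ℝ),(1:ℝ)) := by simp [Prod.ext_iff]
    rw [hw, map_add, map_smul, map_smul, h1, h2]
    simp
  -- constancy via clopen argument
  set S₁ : Set (ℝ × ℝ) := {q | q ∈ U ∧ f q = c} with hS₁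
  set S₂ : Set (ℝ × ℝ) := {q | q ∈ U ∧ f q ≠ c} with hS₂
  have hS₁open : IsOpen S₁ := by
    rw [isOpen_iff_forall_mem_open]
    intro q₀ hq₀
    obtain ⟨r, hr, hball⟩ := Metric.isOpen_iff.1 hU q₀ hq₀.1
    refine ⟨Metric.ball q₀ r, ?_, Metric.isOpen_ball, Metric.mem_ball_self hr⟩
    intro q hq
    refine ⟨hball hq, ?_⟩
    have hdOn : DifferentiableOn ℝ f (Metric.ball q₀ r) := by
      intro x hx
      exact ((hf.1.contDiffAt (hU.mem_nhds (hball hx))).differentiableAt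
        two_ne_zero).differentiableWithinAt
    have hfd' : ∀ x ∈ Metric.ball q₀ r, fderivWithin ℝ f (Metric.ball q₀ r) x = 0 := by
      intro x hx
      rw [fderivWithin_of_isOpen Metric.isOpen_ball hx]
      exact hfd0 x (hball hx)
    have := (convex_ball q₀ r).is_const_of_fderivWithin_eq_zero hdOn hfd'
      hq (Metric.mem_ball_self hr)
    rw [this]
    exact hq₀.2
  have hS₂open : IsOpen S₂ := by
    have : S₂ = U ∩ f ⁻¹' ({c}ᶜ) := by ext q; simp [hS₂]
    rw [this]
    exact hf.1.continuousOn.isOpen_inter_preimage hU (isOpen_compl_singleton)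
  have hdisj : Disjoint S₁ S₂ := by
    rw [Set.disjoint_left]
    rintro q ⟨_, h1⟩ ⟨_, h2⟩
    exact h2 h1
  have hcover : U ⊆ S₁ ∪ S₂ := by
    intro q hq
    by_cases hfq : f q = c
    · exact Or.inl ⟨hq, hfq⟩
    · exact Or.inr ⟨hq, hfq⟩
  rcases hconn.subset_or_subset hS₁open hS₂open hdisj hcover with hsub | hsub
  · exact fun q hq => (hsub hq).2
  · exfalso
    exact (hsub (hOU hq₀)).2 (hc q₀ hq₀)


lemma chord_interior {W : Set (ℝ × ℝ)} (hWconv : Convex ℝ W) {a b : ℝ} (hab : a^2 + b^2 = 1)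
    {w qp qm : ℝ × ℝ} (hqp : qp ∈ W) (hqm : qm ∈ W)
    (hgt : a * w.1 + b * w.2 < a * qp.1 + b * qp.2)
    (hlt : a * qm.1 + b * qm.2 < a * w.1 + b * w.2)
    {ε₁ ε₂ : ℝ} (hε₁ : 0 < ε₁) (hε₂ : 0 < ε₂)
    (hA : w + ε₁ • ((-b, a) : ℝ × ℝ) ∈ W) (hB : w - ε₂ • ((-b, a) : ℝ × ℝ) ∈ W) :
    w ∈ interior W := by
  set c := a * w.1 + b * w.2 with hc
  set cp := a * qp.1 + b * qp.2 with hcp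
  set cm := a * qm.1 + b * qm.2 with hcm
  set dm : ℝ := min (cp - c) (c - cm) with hdm
  have hdm0 : 0 < dm := lt_min (by linarith) (by linarith)
  set K : ℝ := |qp.1 - w.1| + |qp.2 - w.2| + |qm.1 - w.1| + |qm.2 - w.2| + 1 with hK
  have hK0 : 0 < K := by positivity
  set ε : ℝ := min ε₁ ε₂ with hε
  have hε0 : 0 < ε := lt_min hε₁ hε₂
  set r : ℝ := min (ε * dm / (8 * (dm + 2 * K))) (dm / 8) with hr
  have hr0 : 0 < r := lt_min (by positivity) (by positivity)
  clear_value c cp cm dm K ε r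
  rw [mem_interior_iff_mem_nhds, Metric.mem_nhds_iff]
  refine ⟨r, hr0, ?_⟩
  intro p hp
  rw [Metric.mem_ball, Prod.dist_eq, max_lt_iff] at hp
  obtain ⟨hp1, hp2⟩ := hp
  rw [Real.dist_eq] at hp1 hp2
  have haabs : |a| ≤ 1 := by
    rw [← sq_le_one_iff_abs_le_one]; linarith [sq_nonneg b]
  have hbabs : |b| ≤ 1 := by
    rw [← sq_le_one_iff_abs_le_one]; linarith [sq_nonneg a]
  set t : ℝ := a * (p.1 - w.1) + b * (p.2 - w.2) with ht
  have htabs : |t| ≤ 2 * r := by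
    have h1 : |t| ≤ |a| * |p.1 - w.1| + |b| * |p.2 - w.2| := by
      rw [← abs_mul, ← abs_mul]; exact abs_add_le _ _
    have h2 : |a| * |p.1 - w.1| ≤ 1 * r :=
      mul_le_mul haabs hp1.le (abs_nonneg _) zero_le_one
    have h3 : |b| * |p.2 - w.2| ≤ 1 * r :=
      mul_le_mul hbabs hp2.le (abs_nonneg _) zero_le_one
    linarith
  -- choose the target point q and the gap d
  obtain ⟨q, hqW, d, hd, hdsign, hdmle, hdK⟩ :
      ∃ q ∈ W, ∃ d : ℝ, a * q.1 + b * q.2 = c + d ∧ 0 ≤ t / d ∧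
        dm ≤ |d| ∧ |q.1 - w.1| + |q.2 - w.2| ≤ K := by
    rcases le_or_gt 0 t with htpos | htneg
    · refine ⟨qp, hqp, cp - c, by linarith [hcp], div_nonneg htpos (by linarith), ?_, ?_⟩
      · rw [abs_of_pos (by linarith)]; rw [hdm]; exact min_le_left _ _
      · rw [hK]; linarith [abs_nonneg (qm.1 - w.1), abs_nonneg (qm.2 - w.2)]
    · refine ⟨qm, hqm, cm - c, by linarith [hcm], ?_, ?_, ?_⟩
      · rw [div_nonneg_iff]; right; constructor <;> linarith
      · rw [abs_of_neg (by linarith)]; rw [hdm]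
        exact le_trans (min_le_right _ _) (by linarith)
      · rw [hK]; linarith [abs_nonneg (qp.1 - w.1), abs_nonneg (qp.2 - w.2)]
  set lam : ℝ := t / d with hlam
  clear_value t lam
  have hd0 : d ≠ 0 := by intro h; rw [h, abs_zero] at hdmle; linarith
  have hlam0 : 0 ≤ lam := hdsign
  have hlam_le : lam ≤ 2 * r / dm := by
    have h1 : lam ≤ |t| / |d| := by
      rw [hlam, ← abs_div]; exact le_abs_self _
    have h2 : |t| / |d| ≤ 2 * r / dm := by
      rw [div_le_div_iff₀ (abs_pos.2 hd0) hdm0]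
      calc |t| * dm ≤ (2*r) * dm := mul_le_mul_of_nonneg_right htabs hdm0.le
      _ ≤ (2*r) * |d| := mul_le_mul_of_nonneg_left hdmle (by positivity)
    linarith
  have hlam_half : lam ≤ 1/2 := by
    have hrd : r ≤ dm / 8 := by rw [hr]; exact min_le_right _ _
    have : 2 * r / dm ≤ 1/4 := by rw [div_le_iff₀ hdm0]; linarith
    linarith
  have h1lam : (0:ℝ) < 1 - lam := by linarith
  have hld : lam * d = t := by rw [hlam]; exact div_mul_cancel₀ t hd0
  have ht' : a * p.1 + b * p.2 = c + t := by rw [ht, hc]; ring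
  set r1 : ℝ := (p.1 - lam * q.1) / (1 - lam) with hr1
  set r2 : ℝ := (p.2 - lam * q.2) / (1 - lam) with hr2
  have hlrp : a * r1 + b * r2 = c := by
    rw [hr1, hr2]
    field_simp
    linear_combination ht' - lam * hd - hld
  have hz : a * (r1 - w.1) + b * (r2 - w.2) = 0 := by
    linear_combination hlrp + hc
  set s' : ℝ := -b * (r1 - w.1) + a * (r2 - w.2) with hs'
  clear_value r1 r2 s'
  have e1 : r1 - w.1 = -b * s' := by
    linear_combination a * hz - (r1 - w.1) * hab + b * hs'
  have e2 : r2 - w.2 = a * s' := by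
    linear_combination b * hz - (r2 - w.2) * hab - a * hs'
  -- bound s'
  have hd1 : r1 - w.1 = (p.1 - w.1 - lam * (q.1 - w.1)) / (1 - lam) := by
    rw [hr1]; field_simp; ring
  have hd2 : r2 - w.2 = (p.2 - w.2 - lam * (q.2 - w.2)) / (1 - lam) := by
    rw [hr2]; field_simp; ring
  have habs1 : |r1 - w.1| ≤ 2 * (r + lam * K) := by
    rw [hd1, abs_div, abs_of_pos h1lam, div_le_iff₀ h1lam]
    have hnum : |p.1 - w.1 - lam * (q.1 - w.1)| ≤ r + lam * K := by
      calc |p.1 - w.1 - lam * (q.1 - w.1)| ≤ |p.1 - w.1| + |lam * (q.1 - w.1)| := abs_sub _ _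
      _ = |p.1 - w.1| + lam * |q.1 - w.1| := by rw [abs_mul, abs_of_nonneg hlam0]
      _ ≤ r + lam * K := by
          have hqk : |q.1 - w.1| ≤ K := by
            have := abs_nonneg (q.2 - w.2); linarith [hdK]
          have := mul_le_mul_of_nonneg_left hqk hlam0
          linarith
    have hgeq : r + lam * K ≤ 2 * (r + lam * K) * (1 - lam) := by
      have hpos : 0 ≤ r + lam * K := add_nonneg hr0.le (mul_nonneg hlam0 hK0.le)
      have h12 : 0 ≤ 1 - 2 * lam := by linarith
      have hprod := mul_nonneg hpos h12
      have hid : 2 * (r + lam * K) * (1 - lam) - (r + lam * K)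
          = (r + lam * K) * (1 - 2 * lam) := by ring
      linarith [hprod, hid]
    linarith
  have habs2 : |r2 - w.2| ≤ 2 * (r + lam * K) := by
    rw [hd2, abs_div, abs_of_pos h1lam, div_le_iff₀ h1lam]
    have hnum : |p.2 - w.2 - lam * (q.2 - w.2)| ≤ r + lam * K := by
      calc |p.2 - w.2 - lam * (q.2 - w.2)| ≤ |p.2 - w.2| + |lam * (q.2 - w.2)| := abs_sub _ _
      _ = |p.2 - w.2| + lam * |q.2 - w.2| := by rw [abs_mul, abs_of_nonneg hlam0]
      _ ≤ r + lam * K := by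
          have hqk : |q.2 - w.2| ≤ K := by
            have := abs_nonneg (q.1 - w.1); linarith [hdK]
          have := mul_le_mul_of_nonneg_left hqk hlam0
          linarith
    have hgeq : r + lam * K ≤ 2 * (r + lam * K) * (1 - lam) := by
      have hpos : 0 ≤ r + lam * K := add_nonneg hr0.le (mul_nonneg hlam0 hK0.le)
      have h12 : 0 ≤ 1 - 2 * lam := by linarith
      have hprod := mul_nonneg hpos h12
      have hid : 2 * (r + lam * K) * (1 - lam) - (r + lam * K)
          = (r + lam * K) * (1 - 2 * lam) := by ring
      linarith [hprod, hid]
    linarith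
  have hs'abs : |s'| ≤ ε / 2 := by
    have h1 : |s'| ≤ |r1 - w.1| + |r2 - w.2| := by
      rw [hs']
      calc |(-b) * (r1 - w.1) + a * (r2 - w.2)| ≤ |(-b) * (r1 - w.1)| + |a * (r2 - w.2)| :=
        abs_add_le _ _
      _ = |b| * |r1 - w.1| + |a| * |r2 - w.2| := by rw [abs_mul, abs_mul, abs_neg]
      _ ≤ |r1 - w.1| + |r2 - w.2| := by
          have h1 := mul_le_mul_of_nonneg_right hbabs (abs_nonneg (r1 - w.1))
          have h2 := mul_le_mul_of_nonneg_right haabs (abs_nonneg (r2 - w.2))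
          linarith
    have h2 : 4 * (r + lam * K) ≤ ε / 2 := by
      have hra : r ≤ ε * dm / (8 * (dm + 2 * K)) := by rw [hr]; exact min_le_left _ _
      have hlamr : lam * K ≤ 2 * r / dm * K :=
        mul_le_mul_of_nonneg_right hlam_le hK0.le
      have h8 : (0:ℝ) < 8*(dm+2*K) := by positivity
      have hra' : 8*(dm+2*K)*r ≤ ε*dm := by
        calc 8*(dm+2*K)*r ≤ 8*(dm+2*K)*(ε * dm / (8 * (dm + 2 * K))) := by
              exact mul_le_mul_of_nonneg_left hra h8.le
        _ = ε * dm := by rw [mul_comm, div_mul_cancel₀ _ (ne_of_gt h8)]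
      have key : 4 * (r + 2 * r / dm * K) ≤ ε / 2 := by
        rw [← mul_le_mul_iff_of_pos_right hdm0]
        have hexp : (4 * (r + 2 * r / dm * K)) * dm = 4*r*dm + 8*r*K := by
          field_simp; ring
        rw [hexp]
        have hid : 8*(dm+2*K)*r = 8*(r*dm) + 16*(r*K) := by ring
        have hid2 : 4*r*dm = 4*(r*dm) := by ring
        have hid3 : 8*r*K = 8*(r*K) := by ring
        linarith [hra', hid, hid2, hid3]
      linarith
    linarith
  -- the chord point and final convex combinations
  have hεle1 : ε ≤ ε₁ := by rw [hε]; exact min_le_left _ _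
  have hεle2 : ε ≤ ε₂ := by rw [hε]; exact min_le_right _ _
  obtain ⟨hsl, hsr⟩ := abs_le.1 hs'abs
  have hs1 : -ε₂ ≤ s' := by linarith
  have hs2 : s' ≤ ε₁ := by linarith
  set θ : ℝ := (s' + ε₂) / (ε₁ + ε₂) with hθ
  have hsum : (0:ℝ) < ε₁ + ε₂ := by linarith
  have hθ0 : 0 ≤ θ := div_nonneg (by linarith) hsum.le
  have hθ1 : θ ≤ 1 := by rw [hθ, div_le_one hsum]; linarith
  have hθs : θ * (ε₁ + ε₂) - ε₂ = s' := by rw [hθ]; field_simp; ring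
  clear_value θ
  have hmem := hWconv hB hA (by linarith : (0:ℝ) ≤ 1 - θ) hθ0 (by ring)
  have hcomb : (1-θ) • (w - ε₂ • ((-b,a) : ℝ × ℝ)) + θ • (w + ε₁ • ((-b,a) : ℝ × ℝ))
      = ((r1, r2) : ℝ × ℝ) := by
    rw [Prod.ext_iff]
    constructor
    · show (1-θ)*(w.1 - ε₂*(-b)) + θ*(w.1 + ε₁*(-b)) = r1
      linear_combination -e1 - b * hθs
    · show (1-θ)*(w.2 - ε₂*a) + θ*(w.2 + ε₁*a) = r2
      linear_combination -e2 + a * hθs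
  have hrpW : ((r1, r2) : ℝ × ℝ) ∈ W := hcomb ▸ hmem
  have hfinal := hWconv hrpW hqW (by linarith : (0:ℝ) ≤ 1 - lam) hlam0 (by ring)
  have hp' : (1-lam) • ((r1, r2) : ℝ × ℝ) + lam • q = p := by
    rw [Prod.ext_iff]
    constructor
    · show (1-lam)*r1 + lam*q.1 = p.1
      rw [hr1]; field_simp; ring
    · show (1-lam)*r2 + lam*q.2 = p.2
      rw [hr2]; field_simp; ring
  exact hp' ▸ hfinal



lemma frontier_approach {W : Set (ℝ × ℝ)} (hWconv : Convex ℝ W) (hWcl : IsClosed W)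
    {a b : ℝ} (hab : a^2 + b^2 = 1) {w : ℝ × ℝ} (hw : w ∈ frontier W)
    {qp qm : ℝ × ℝ} (hqp : qp ∈ W) (hqm : qm ∈ W)
    (hgt : a * w.1 + b * w.2 < a * qp.1 + b * qp.2)
    (hlt : a * qm.1 + b * qm.2 < a * w.1 + b * w.2)
    {i : ℝ × ℝ} (hi : i ∈ interior W) :
    w ∈ closure {p | p ∈ frontier W ∧ a * w.1 + b * w.2 < a * p.1 + b * p.2} := by
  have hwW : w ∈ W := hWcl.frontier_subset hw
  have hwni : w ∉ interior W := hw.2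
  -- find the direction along the level line leaving W
  obtain ⟨e₀, he₀ℓ, he₀n, he₀⟩ :
      ∃ e₀ : ℝ × ℝ, a * e₀.1 + b * e₀.2 = 0 ∧ ‖e₀‖ ≤ 1 ∧
        ∀ ε : ℝ, ε > 0 → w + ε • e₀ ∉ W := by
    have haabs : |a| ≤ 1 := by
      rw [← sq_le_one_iff_abs_le_one]; linarith [sq_nonneg b]
    have hbabs : |b| ≤ 1 := by
      rw [← sq_le_one_iff_abs_le_one]; linarith [sq_nonneg a]
    have hnrm : ‖((-b, a) : ℝ × ℝ)‖ ≤ 1 := by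
      rw [Prod.norm_def]
      simp only [Real.norm_eq_abs, abs_neg]
      exact max_le hbabs haabs
    have hside : (∀ ε > (0:ℝ), w + ε • ((-b,a) : ℝ × ℝ) ∉ W) ∨
        (∀ ε > (0:ℝ), w + ε • ((b,-a) : ℝ × ℝ) ∉ W) := by
      by_contra hcon
      push_neg at hcon
      obtain ⟨⟨ε₁, hε₁, hε₁W⟩, ⟨ε₂, hε₂, hε₂W⟩⟩ := hcon
      have hB : w - ε₂ • ((-b, a) : ℝ × ℝ) ∈ W := by
        have : w - ε₂ • ((-b, a) : ℝ × ℝ) = w + ε₂ • ((b, -a) : ℝ × ℝ) := by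
          rw [Prod.ext_iff]
          constructor
          · show w.1 - ε₂ * (-b) = w.1 + ε₂ * b; ring
          · show w.2 - ε₂ * a = w.2 + ε₂ * (-a); ring
        rw [this]; exact hε₂W
      exact hwni (chord_interior hWconv hab hqp hqm hgt hlt hε₁ hε₂ hε₁W hB)
    rcases hside with h | h
    · exact ⟨(-b, a), by show a * (-b) + b * a = 0; ring, hnrm, h⟩
    · refine ⟨(b, -a), by show a * b + b * (-a) = 0; ring, ?_, h⟩
      rw [Prod.norm_def]; simp only [Real.norm_eq_abs, abs_neg]
      exact max_le hbabs haabs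
  -- interior point with larger functional value
  set c := a * w.1 + b * w.2 with hc
  set cp := a * qp.1 + b * qp.2 with hcp
  set li := a * i.1 + b * i.2 with hli
  set δs : ℝ := min (1/2) ((cp - c) / (2 * (|li - cp| + 1))) with hδs
  have hδs0 : 0 < δs := lt_min (by norm_num)
    (div_pos (by linarith) (by positivity))
  have hδs1 : δs < 1 := lt_of_le_of_lt (min_le_left _ _) (by norm_num)
  have hδsle : δs ≤ (cp - c) / (2 * (|li - cp| + 1)) := min_le_right _ _
  clear_value c cp li δs
  set w₁ : ℝ × ℝ := δs • i + (1 - δs) • qp with hw₁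
  have hw₁i : w₁ ∈ interior W := by
    apply hWconv.openSegment_interior_closure_subset_interior hi (subset_closure hqp)
    exact ⟨δs, 1 - δs, hδs0, by linarith, by ring, rfl⟩
  have hlw₁ : a * w₁.1 + b * w₁.2 = δs * li + (1 - δs) * cp := by
    show a * (δs * i.1 + (1 - δs) * qp.1) + b * (δs * i.2 + (1 - δs) * qp.2)
      = δs * li + (1 - δs) * cp
    rw [hli, hcp]; ring
  have hw₁ℓ : c < a * w₁.1 + b * w₁.2 := by
    rw [hlw₁]
    have hD : 0 < |li - cp| + 1 := by positivity
    have h2 : δs * (cp - li) ≤ (cp - c) / 2 := by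
      rcases le_or_gt (cp - li) 0 with hneg | hpos
      · have : δs * (cp - li) ≤ 0 := mul_nonpos_of_nonneg_of_nonpos hδs0.le hneg
        linarith
      · have hle : cp - li ≤ |li - cp| + 1 := by
          rw [abs_sub_comm]; linarith [le_abs_self (cp - li)]
        calc δs * (cp - li) ≤ ((cp - c) / (2 * (|li - cp| + 1))) * (|li - cp| + 1) := by
              apply mul_le_mul hδsle hle (by linarith)
                (div_nonneg (by linarith) (by positivity))
        _ = (cp - c) / 2 := by field_simp
      -- done
    have hid : δs * li + (1 - δs) * cp = cp - δs * (cp - li) := by ring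
    linarith [h2, hid]
  clear_value w₁
  -- main approximation
  rw [Metric.mem_closure_iff]
  intro ρ hρ
  set Cz : ℝ := ‖w₁ - w‖ + 1 with hCz
  have hCz0 : 0 < Cz := by positivity
  set t₀ : ℝ := min (1/2) (ρ / (4 * Cz)) with ht₀
  have ht₀0 : 0 < t₀ := lt_min (by norm_num) (by positivity)
  have ht₀h : t₀ ≤ 1/2 := min_le_left _ _
  have ht₀ρ : t₀ * ‖w₁ - w‖ ≤ ρ / 4 := by
    have h1 : t₀ ≤ ρ / (4 * Cz) := min_le_right _ _
    have h2 : ‖w₁ - w‖ ≤ Cz := by rw [hCz]; linarith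
    calc t₀ * ‖w₁ - w‖ ≤ (ρ / (4 * Cz)) * Cz :=
      mul_le_mul h1 h2 (norm_nonneg _) (by positivity)
    _ = ρ / 4 := by field_simp
  clear_value t₀ Cz
  have hy₀ : t₀ • w₁ + (1 - t₀) • w ∈ interior W :=
    hWconv.combo_interior_closure_mem_interior hw₁i (subset_closure hwW) ht₀0
      (by linarith) (by ring)
  set y₀ : ℝ × ℝ := t₀ • w₁ + (1 - t₀) • w with hy₀def
  obtain ⟨rι, hrι0, hrι⟩ := Metric.isOpen_iff.1 isOpen_interior y₀ hy₀
  set δ : ℝ := min (ρ/4) (rι/2) with hδ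
  have hδ0 : 0 < δ := lt_min (by linarith) (by linarith)
  have hδρ : δ ≤ ρ/4 := min_le_left _ _
  have hδr : δ ≤ rι/2 := min_le_right _ _
  clear_value δ
  set z : ℝ × ℝ := w + δ • e₀ with hz
  have hzW : z ∉ W := he₀ δ hδ0
  have hzℓ : a * z.1 + b * z.2 = c := by
    show a * (w.1 + δ * e₀.1) + b * (w.2 + δ * e₀.2) = c
    rw [hc]; linear_combination δ * he₀ℓ
  clear_value z
  -- the point on the segment [z, w₁] at parameter t₀ is interior
  have hzt₀ : (1 - t₀) • z + t₀ • w₁ ∈ interior W := by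
    apply hrι
    have hptid : (1 - t₀) • z + t₀ • w₁ = y₀ + ((1 - t₀) * δ) • e₀ := by
      rw [hz, hy₀def]
      module
    rw [Metric.mem_ball, hptid, dist_eq_norm, add_sub_cancel_left, norm_smul, Real.norm_eq_abs]
    have h1 : |(1 - t₀) * δ| = (1 - t₀) * δ := abs_of_pos (by nlinarith)
    rw [h1]
    calc (1 - t₀) * δ * ‖e₀‖ ≤ (1 - t₀) * δ * 1 := by
          apply mul_le_mul_of_nonneg_left he₀n (by nlinarith)
    _ = (1 - t₀) * δ := mul_one _
    _ ≤ 1 * δ := by nlinarith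
    _ < rι := by linarith
  set T : Set ℝ := {t | t ∈ Icc (0:ℝ) 1 ∧ (1 - t) • z + t • w₁ ∈ W} with hT
  have hTclosed : IsClosed T := by
    apply IsClosed.inter isClosed_Icc
    exact hWcl.preimage (by fun_prop)
  have hT1 : (1:ℝ) ∈ T := by
    refine ⟨⟨zero_le_one, le_refl 1⟩, ?_⟩
    simp only [sub_self, zero_smul, one_smul, zero_add]
    exact interior_subset hw₁i
  have hTbdd : BddBelow T := ⟨0, fun t ht => ht.1.1⟩
  set ts : ℝ := sInf T with hts
  have htsT : ts ∈ T := hTclosed.csInf_mem ⟨1, hT1⟩ hTbdd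
  have hts0 : 0 < ts := by
    rcases lt_or_eq_of_le htsT.1.1 with h | h
    · exact h
    · exfalso
      apply hzW
      have := htsT.2
      rw [← h] at this
      simpa using this
  have htst₀ : ts ≤ t₀ := by
    apply csInf_le hTbdd
    exact ⟨⟨ht₀0.le, by linarith⟩, interior_subset hzt₀⟩
  have hts1 : ts ≤ 1 := htsT.1.2
  clear_value ts
  set bp : ℝ × ℝ := (1 - ts) • z + ts • w₁ with hbp
  have hbpW : bp ∈ W := htsT.2
  -- bp is a frontier point
  have hbpfr : bp ∈ frontier W := by
    rw [frontier_eq_closure_inter_closure]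
    refine ⟨subset_closure hbpW, ?_⟩
    rw [Metric.mem_closure_iff]
    intro η hη
    set N : ℝ := ‖z - w₁‖ + 1 with hN
    have hN0 : 0 < N := by positivity
    set μ : ℝ := min (ts/2) (η / (2 * N)) with hμ
    have hμ0 : 0 < μ := lt_min (by linarith) (by positivity)
    have hμts : μ ≤ ts/2 := min_le_left _ _
    set t' : ℝ := ts - μ with ht'
    have ht'0 : 0 ≤ t' := by rw [ht']; linarith
    have ht'lt : t' < ts := by rw [ht']; linarith
    have ht'nT : t' ∉ T := fun hmem => absurd (csInf_le hTbdd hmem) (not_le.2 (hts ▸ ht'lt))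
    have ht'nW : (1 - t') • z + t' • w₁ ∉ W := by
      intro hmem
      exact ht'nT ⟨⟨ht'0, by linarith⟩, hmem⟩
    refine ⟨(1 - t') • z + t' • w₁, ht'nW, ?_⟩
    have hdiff : bp - ((1 - t') • z + t' • w₁) = (ts - t') • (w₁ - z) := by
      rw [hbp, ht']
      module
    rw [dist_eq_norm, hdiff, norm_smul, Real.norm_eq_abs]
    have habs : |ts - t'| = μ := by rw [ht']; rw [abs_of_pos (by linarith)]; ring
    rw [habs]
    have h1 : ‖w₁ - z‖ ≤ N := by rw [hN, norm_sub_rev]; linarith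
    have h2 : μ ≤ η / (2 * N) := min_le_right _ _
    calc μ * ‖w₁ - z‖ ≤ (η / (2 * N)) * N :=
      mul_le_mul h2 h1 (norm_nonneg _) (by positivity)
    _ = η / 2 := by field_simp
    _ < η := by linarith
  -- bp has strictly larger functional value
  have hbpℓ : c < a * bp.1 + b * bp.2 := by
    have hcomp : a * bp.1 + b * bp.2
        = (1 - ts) * (a * z.1 + b * z.2) + ts * (a * w₁.1 + b * w₁.2) := by
      show a * ((1 - ts) * z.1 + ts * w₁.1) + b * ((1 - ts) * z.2 + ts * w₁.2)
        = (1 - ts) * (a * z.1 + b * z.2) + ts * (a * w₁.1 + b * w₁.2)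
      ring
    rw [hcomp, hzℓ]
    have := mul_pos hts0 (by linarith [hw₁ℓ] : (0:ℝ) < a * w₁.1 + b * w₁.2 - c)
    nlinarith [this]
  -- bp is close to w
  have hdist : dist w bp < ρ := by
    have hdiff : bp - w = ((1 - ts) * δ) • e₀ + ts • (w₁ - w) := by
      rw [hbp, hz]
      module
    rw [dist_eq_norm, norm_sub_rev, hdiff]
    calc ‖((1 - ts) * δ) • e₀ + ts • (w₁ - w)‖
        ≤ ‖((1 - ts) * δ) • e₀‖ + ‖ts • (w₁ - w)‖ := norm_add_le _ _
    _ = |(1 - ts) * δ| * ‖e₀‖ + |ts| * ‖w₁ - w‖ := by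
        rw [norm_smul, norm_smul, Real.norm_eq_abs, Real.norm_eq_abs]
    _ ≤ δ + t₀ * ‖w₁ - w‖ := by
        have ha1 : |(1 - ts) * δ| ≤ δ := by
          rw [abs_of_nonneg (by nlinarith)]
          nlinarith
        have ha2 : |ts| = ts := abs_of_pos hts0
        have := mul_le_mul_of_nonneg_left he₀n (abs_nonneg ((1 - ts) * δ))
        have h3 : |ts| * ‖w₁ - w‖ ≤ t₀ * ‖w₁ - w‖ := by
          rw [ha2]; exact mul_le_mul_of_nonneg_right htst₀ (norm_nonneg _)
        nlinarith [norm_nonneg (w₁ - w), he₀n, abs_nonneg ((1 - ts) * δ),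
          mul_le_mul_of_nonneg_left he₀n (abs_nonneg ((1 - ts) * δ))]
    _ ≤ ρ/4 + ρ/4 := by linarith [ht₀ρ]
    _ < ρ := by linarith
  exact ⟨bp, ⟨hbpfr, hbpℓ⟩, hdist⟩







lemma key_connected (V W : Set (ℝ × ℝ))
    (hV : IsClosureOfSCRegion V) (hW : IsClosureOfSCRegion W) (hWconv : Convex ℝ W)
    (u v : ℝ × ℝ → ℝ)
    (hu : ContinuousOn u V) (hv : ContinuousOn v V)
    (huh : HarmonicOn2 u (interior V)) (hvh : HarmonicOn2 v (interior V))
    (hmap : ∀ x ∈ V, (u x, v x) ∈ W)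
    (hinj : Set.InjOn (fun p => (u p, v p)) (frontier V))
    (him : (fun p => (u p, v p)) '' frontier V = frontier W)
    (a b : ℝ) (hab : a^2 + b^2 = 1) :
    IsConnected {x | x ∈ frontier V ∧ ∀ᶠ y in 𝓝[V] x,
      a * u y + b * v y ≤ a * u x + b * v x} := by
  classical
  obtain ⟨Ω, hΩo, hΩb, hΩne, hΩsc, hVeq⟩ := hV
  obtain ⟨Ω', hΩ'o, hΩ'b, hΩ'ne, _, hWeq⟩ := hW
  set F : ℝ × ℝ → ℝ × ℝ := fun p => (u p, v p) with hF
  set f : ℝ × ℝ → ℝ := fun p => a * u p + b * v p with hf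
  -- basic topology
  have hVcl : IsClosed V := hVeq ▸ isClosed_closure
  have hWcl : IsClosed W := hWeq ▸ isClosed_closure
  have hVcomp : IsCompact V := by
    rw [hVeq]; exact Metric.isCompact_of_isClosed_isBounded isClosed_closure hΩb.closure
  have hWcomp : IsCompact W := by
    rw [hWeq]; exact Metric.isCompact_of_isClosed_isBounded isClosed_closure hΩ'b.closure
  have hΩV : Ω ⊆ V := hVeq ▸ subset_closure
  have hΩint : Ω ⊆ interior V := hΩo.subset_interior_iff.2 hΩV
  have hVci : V ⊆ closure (interior V) := by
    have h1 : Ω ⊆ interior V := hΩint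
    calc V = closure Ω := hVeq
    _ ⊆ closure (interior V) := closure_mono h1
  have hfrVV : frontier V ⊆ V := hVcl.frontier_subset
  have hfrWW : frontier W ⊆ W := hWcl.frontier_subset
  have hΩ'W : Ω' ⊆ W := hWeq ▸ subset_closure
  have hΩ'int : Ω' ⊆ interior W := hΩ'o.subset_interior_iff.2 hΩ'W
  have hWintne : (interior W).Nonempty := hΩ'ne.mono hΩ'int
  obtain ⟨i₀, hi₀⟩ := hWintne
  -- harmonicity and continuity of f
  have hfh : HarmonicOn2 f (interior V) := harmonic_comb isOpen_interior huh hvh a b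
  have hfc : ContinuousOn f V := (continuousOn_const.mul hu).add (continuousOn_const.mul hv)
  -- extrema of the linear functional on W
  have hlcont : ContinuousOn (fun p : ℝ × ℝ => a * p.1 + b * p.2) W := by fun_prop
  have hWne : W.Nonempty := hΩ'ne.mono hΩ'W
  obtain ⟨wM, hwMW, hwMmax⟩ := hWcomp.exists_isMaxOn hWne hlcont
  obtain ⟨wm, hwmW, hwmmin⟩ := hWcomp.exists_isMinOn hWne hlcont
  set M : ℝ := a * wM.1 + b * wM.2 with hM
  set m : ℝ := a * wm.1 + b * wm.2 with hm
  have hMmax : ∀ p ∈ W, a * p.1 + b * p.2 ≤ M := fun p hp => hwMmax hp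
  have hmmin : ∀ p ∈ W, m ≤ a * p.1 + b * p.2 := fun p hp => hwmmin hp
  -- interior points are strictly below the max
  have hstrict : ∀ p ∈ interior W, a * p.1 + b * p.2 < M := by
    intro p hp
    obtain ⟨r, hr0, hrball⟩ := Metric.isOpen_iff.1 isOpen_interior p hp
    have hmem : p + (r/2) • ((a, b) : ℝ × ℝ) ∈ W := by
      apply interior_subset
      apply hrball
      rw [Metric.mem_ball, dist_self_add_left, norm_smul, Real.norm_eq_abs,
        abs_of_pos (by linarith : (0:ℝ) < r/2)]
      have hn : ‖((a, b) : ℝ × ℝ)‖ ≤ 1 := by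
        rw [Prod.norm_def]
        simp only [Real.norm_eq_abs]
        have h1 : |a| ≤ 1 := by rw [← sq_le_one_iff_abs_le_one]; linarith [sq_nonneg b]
        have h2 : |b| ≤ 1 := by rw [← sq_le_one_iff_abs_le_one]; linarith [sq_nonneg a]
        exact max_le h1 h2
      nlinarith
    have hval := hMmax _ hmem
    have hcomp : a * (p + (r/2) • ((a, b) : ℝ × ℝ)).1 + b * (p + (r/2) • ((a, b) : ℝ × ℝ)).2
        = a * p.1 + b * p.2 + r/2 := by
      show a * (p.1 + r/2 * a) + b * (p.2 + r/2 * b) = a * p.1 + b * p.2 + r/2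
      linear_combination (r/2) * hab
    rw [hcomp] at hval
    linarith
  have hmM : m < M := by
    have h1 := hstrict i₀ hi₀
    have h2 := hmmin i₀ (interior_subset hi₀)
    linarith
  have hKfr : ∀ p ∈ W, a * p.1 + b * p.2 = M → p ∈ frontier W := by
    intro p hp hpM
    rw [hWcl.frontier_eq, mem_diff]
    exact ⟨hp, fun hint => absurd hpM (ne_of_lt (hstrict p hint))⟩
  -- boundary bounds for f
  have hFfr : ∀ y ∈ frontier V, F y ∈ frontier W := by
    intro y hy
    rw [← him]
    exact mem_image_of_mem F hy
  have hbd : ∀ y ∈ frontier V, f y ≤ M := fun y hy => hMmax (F y) (hfrWW (hFfr y hy))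
  have hmbd : ∀ y ∈ frontier V, m ≤ f y := fun y hy => hmmin (F y) (hfrWW (hFfr y hy))
  -- global bounds on V
  have hglob : ∀ z ∈ V, f z ≤ M := by
    rw [hVeq] at hfc ⊢
    rw [hVeq] at hbd hfh
    exact wmp hΩb hfc hfh hbd
  have hglobm : ∀ z ∈ V, m ≤ f z := by
    have hneg : ∀ z ∈ V, -a * u z + -b * v z ≤ -m := by
      rw [hVeq] at hu hv ⊢
      rw [hVeq] at hmbd huh hvh
      apply wmp hΩb ((continuousOn_const.mul hu).add (continuousOn_const.mul hv))
        (harmonic_comb isOpen_interior huh hvh (-a) (-b))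
      intro y hy
      have h2 : m ≤ a * u y + b * v y := hmbd y hy
      show -a * u y + -b * v y ≤ -m
      linarith
    intro z hz
    have h2 := hneg z hz
    show m ≤ a * u z + b * v z
    linarith
  -- the boundary homeomorphism and its inverse G
  have hfrVcomp : IsCompact (frontier V) := hVcomp.of_isClosed_subset isClosed_frontier hfrVV
  haveI hcs : CompactSpace ↥(frontier V) := isCompact_iff_compactSpace.1 hfrVcomp
  have hFcont : ContinuousOn F (frontier V) :=
    ((hu.mono hfrVV).prodMk (hv.mono hfrVV))
  set φ : ↥(frontier V) → ↥(frontier W) := fun x => ⟨F ↑x, hFfr ↑x x.2⟩ with hφ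
  have hφbij : Function.Bijective φ := by
    constructor
    · intro x y hxy
      exact Subtype.ext (hinj x.2 y.2 (congrArg Subtype.val hxy))
    · intro p
      have : (p : ℝ × ℝ) ∈ F '' frontier V := by rw [him]; exact p.2
      obtain ⟨x, hx, hFx⟩ := this
      exact ⟨⟨x, hx⟩, Subtype.ext hFx⟩
  set eqv : ↥(frontier V) ≃ ↥(frontier W) := Equiv.ofBijective φ hφbij with heqv
  have hφcont : Continuous (eqv : ↥(frontier V) → ↥(frontier W)) := by
    apply Continuous.subtype_mk
    exact hFcont.restrict
  set homeo : ↥(frontier V) ≃ₜ ↥(frontier W) :=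
    Continuous.homeoOfEquivCompactToT2 (f := eqv) hφcont with hhomeo
  set G : ℝ × ℝ → ℝ × ℝ :=
    fun p => if h : p ∈ frontier W then ↑(homeo.symm ⟨p, h⟩) else wM with hG
  have hGmem : ∀ p, ∀ h : p ∈ frontier W, G p ∈ frontier V ∧ F (G p) = p := by
    intro p h
    have hGp : G p = ↑(homeo.symm ⟨p, h⟩) := dif_pos h
    constructor
    · rw [hGp]; exact (homeo.symm ⟨p, h⟩).2
    · rw [hGp]
      have : φ (homeo.symm ⟨p, h⟩) = homeo (homeo.symm ⟨p, h⟩) := rfl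
      have h2 : homeo (homeo.symm ⟨p, h⟩) = ⟨p, h⟩ := homeo.apply_symm_apply _
      have h3 := congrArg Subtype.val (this.trans h2)
      exact h3
  have hGF : ∀ x ∈ frontier V, G (F x) = x := by
    intro x hx
    have h : F x ∈ frontier W := hFfr x hx
    have hGp : G (F x) = ↑(homeo.symm ⟨F x, h⟩) := dif_pos h
    rw [hGp]
    have h1 : (⟨F x, h⟩ : ↥(frontier W)) = homeo ⟨x, hx⟩ := Subtype.ext rfl
    rw [h1, homeo.symm_apply_apply]
  have hGcont : ContinuousOn G (frontier W) := by
    rw [continuousOn_iff_continuous_restrict]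
    have : (frontier W).domRestrict G = fun p => ↑(homeo.symm p) := by
      funext p
      simp only [domRestrict_apply, hG, dif_pos p.2]
    rw [this]
    exact continuous_subtype_val.comp homeo.symm.continuous
  -- characterize the local max set
  set S : Set (ℝ × ℝ) := {x | x ∈ frontier V ∧ ∀ᶠ y in 𝓝[V] x, f y ≤ f x} with hS
  have hSchar : S = {x | x ∈ frontier V ∧ f x = M} := by
    ext x
    simp only [hS, mem_setOf_eq]
    constructor
    · rintro ⟨hx, hev⟩
      refine ⟨hx, ?_⟩
      by_contra hne
      have hcM : f x < M := lt_of_le_of_ne (hbd x hx) hne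
      have hcm : m ≤ f x := hmbd x hx
      rcases lt_or_eq_of_le hcm with hmc | hmc
      · -- m < f x < M : use frontier_approach
        have hw : F x ∈ frontier W := hFfr x hx
        have hgt' : a * (F x).1 + b * (F x).2 < a * wM.1 + b * wM.2 := hcM
        have hlt' : a * wm.1 + b * wm.2 < a * (F x).1 + b * (F x).2 := hmc
        have happ := frontier_approach hWconv hWcl hab hw hwMW hwmW hgt' hlt' hi₀
        have hcw : ContinuousWithinAt G
            {p | p ∈ frontier W ∧ a * (F x).1 + b * (F x).2 < a * p.1 + b * p.2} (F x) :=
          (hGcont (F x) hw).mono (fun p hp => hp.1)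
        have hxcl := hcw.mem_closure_image happ
        rw [hGF x hx] at hxcl
        have hsub : G '' {p | p ∈ frontier W ∧ a * (F x).1 + b * (F x).2 < a * p.1 + b * p.2}
            ⊆ {y | y ∈ V ∧ f x < f y} := by
          rintro _ ⟨p, ⟨hpfr, hpv⟩, rfl⟩
          obtain ⟨hGfr, hFG⟩ := hGmem p hpfr
          refine ⟨hfrVV hGfr, ?_⟩
          have heq2 : f (G p) = a * (F (G p)).1 + b * (F (G p)).2 := rfl
          rw [heq2, hFG]
          exact hpv
        have hxcl2 : x ∈ closure {y | y ∈ V ∧ f x < f y} := closure_mono hsub hxcl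
        rw [eventually_nhdsWithin_iff] at hev
        obtain ⟨t, hts, ht⟩ := hev.exists_mem
        obtain ⟨y, hyt, hyV, hyf⟩ := mem_closure_iff_nhds.1 hxcl2 t hts
        exact absurd (ht y hyt hyV) (not_le.2 hyf)
      · -- f x = m : f is locally constant, hence globally constant — contradiction
        rw [eventually_nhdsWithin_iff] at hev
        obtain ⟨A, hA, hAopen, hxA⟩ := eventually_nhds_iff.1 hev
        have hOne : (A ∩ Ω).Nonempty := by
          have hxV : x ∈ closure Ω := by rw [← hVeq]; exact hfrVV hx
          exact _root_.mem_closure_iff.1 hxV A hAopen hxA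
        have hconst : ∀ q ∈ A ∩ Ω, f q = m := by
          rintro q ⟨hqA, hqΩ⟩
          have h1 := hA q hqA (hΩV hqΩ)
          have h2 := hglobm q (hΩV hqΩ)
          rw [← hmc] at h1
          linarith
        have hΩpre : IsPreconnected Ω := by
          haveI := hΩsc
          haveI hpc : PathConnectedSpace ↥Ω := inferInstance
          have h1 : IsPathConnected Ω := (isPathConnected_iff_pathConnectedSpace).2 hpc
          exact h1.isConnected.isPreconnected
        have hUpre : IsPreconnected (interior V) := by
          apply hΩpre.subset_closure hΩint
          intro y hy
          rw [← hVeq]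
          exact interior_subset hy
        have hallm := harmonic_eq_const_of_open isOpen_interior hUpre hfh
          (hAopen.inter hΩo) hOne (fun q hq => hΩint hq.2) hconst
        have hVconst : ∀ y ∈ V, f y = m := by
          have hEq : EqOn f (fun _ => m) V := by
            apply Set.EqOn.of_subset_closure (s := interior V)
              (fun q hq => hallm q hq) hfc continuousOn_const interior_subset hVci
          exact fun y hy => hEq hy
        have hwMfr : wM ∈ frontier W := hKfr wM hwMW rfl
        have hwMim : wM ∈ F '' frontier V := by rw [him]; exact hwMfr
        obtain ⟨y, hyfr, hFy⟩ := hwMim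
        have h1 : f y = M := by
          have heq2 : f y = a * (F y).1 + b * (F y).2 := rfl
          rw [heq2, hFy]
        have h2 := hVconst y (hfrVV hyfr)
        rw [h1] at h2
        exact absurd h2.symm (ne_of_lt hmM)
    · rintro ⟨hx, hfx⟩
      refine ⟨hx, ?_⟩
      filter_upwards [self_mem_nhdsWithin] with y hy
      rw [hfx]
      exact hglob y hy
  -- the face of W
  set Kface : Set (ℝ × ℝ) := {p | p ∈ W ∧ a * p.1 + b * p.2 = M} with hKf
  have hKconv : Convex ℝ Kface := by
    intro p hp q hq s t hs ht hst
    refine ⟨hWconv hp.1 hq.1 hs ht hst, ?_⟩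
    show a * (s * p.1 + t * q.1) + b * (s * p.2 + t * q.2) = M
    linear_combination s * hp.2 + t * hq.2 + M * hst
  have hKne : Kface.Nonempty := ⟨wM, hwMW, rfl⟩
  have hKsub : Kface ⊆ frontier W := fun p hp => hKfr p hp.1 hp.2
  have himage : G '' Kface = {x | x ∈ frontier V ∧ f x = M} := by
    ext x
    constructor
    · rintro ⟨p, ⟨hpW, hpM⟩, rfl⟩
      obtain ⟨hGfr, hFG⟩ := hGmem p (hKsub ⟨hpW, hpM⟩)
      refine ⟨hGfr, ?_⟩
      have heq2 : f (G p) = a * (F (G p)).1 + b * (F (G p)).2 := rfl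
      rw [heq2, hFG]
      exact hpM
    · rintro ⟨hx, hfx⟩
      exact ⟨F x, ⟨hfrWW (hFfr x hx), hfx⟩, hGF x hx⟩
  show IsConnected S
  rw [hSchar, ← himage]
  exact IsConnected.image ⟨hKne, hKconv.isPreconnected⟩ G (hGcont.mono hKsub)

/-- With `F = (u, v) : V → W` as above (`u, v` continuous on `V`, harmonic
on its interior, `F(V) ⊆ W`, `W` convex, and `F|∂V` a homeomorphism onto `∂W`), for every
`α ∈ [0, π)` the sets of local-maximum and local-minimum boundary points of
`f_α = cos(α)·u + sin(α)·v` (with neighborhoods taken in `V`) are nonempty and connected. -/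
theorem falpha_unique_max_min (V W : Set (ℝ × ℝ))
    (hV : IsClosureOfSCRegion V) (hW : IsClosureOfSCRegion W) (hWconv : Convex ℝ W)
    (u v : ℝ × ℝ → ℝ)
    (hu : ContinuousOn u V) (hv : ContinuousOn v V)
    (huh : HarmonicOn2 u (interior V)) (hvh : HarmonicOn2 v (interior V))
    (hmap : ∀ x ∈ V, (u x, v x) ∈ W)
    (hinj : Set.InjOn (fun p => (u p, v p)) (frontier V))
    (him : (fun p => (u p, v p)) '' frontier V = frontier W) :
    ∀ α ∈ Ico (0 : ℝ) Real.pi,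
      IsConnected {x ∈ frontier V | ∀ᶠ y in 𝓝[V] x,
        Real.cos α * u y + Real.sin α * v y ≤ Real.cos α * u x + Real.sin α * v x} ∧
      IsConnected {x ∈ frontier V | ∀ᶠ y in 𝓝[V] x,
        Real.cos α * u x + Real.sin α * v x ≤ Real.cos α * u y + Real.sin α * v y} := by
  intro α _
  have hsc := Real.sin_sq_add_cos_sq α
  have hab : (Real.cos α)^2 + (Real.sin α)^2 = 1 := by linarith
  have hab2 : (-Real.cos α)^2 + (-Real.sin α)^2 = 1 := by ring_nf; linarith
  constructor
  · exact key_connected V W hV hW hWconv u v hu hv huh hvh hmap hinj him _ _ hab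
  · have h := key_connected V W hV hW hWconv u v hu hv huh hvh hmap hinj him
      (-Real.cos α) (-Real.sin α) hab2
    have hset : {x ∈ frontier V | ∀ᶠ y in 𝓝[V] x,
        Real.cos α * u x + Real.sin α * v x ≤ Real.cos α * u y + Real.sin α * v y}
        = {x | x ∈ frontier V ∧ ∀ᶠ y in 𝓝[V] x,
        -Real.cos α * u y + -Real.sin α * v y ≤ -Real.cos α * u x + -Real.sin α * v x} := by
      ext x
      simp only [mem_setOf_eq, mem_sep_iff]
      refine and_congr_right fun _ => eventually_congr (Eventually.of_forall fun y => ?_)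
      constructor <;> intro h2 <;> linarith
    rw [hset]
    exact h
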